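/- There exists b with 0 < b < 1 such that ∫₀^{2π} cos²(t) · √(sin²(t) + b²·cos²(t)) dt ≠ (1/2) · ∫₀^{2π} √(sin²(t) + b²·cos²(t)) dt. (Consequently, the average of x² over the ellipse {(x,y) : x² + y²/b² = 1} with respect to normalized arclength measure differs from 1/2, so the trace formula tr A = N·∫_{S_X} ⟨Ax, x*⟩ dμ can fail for a two-dimensional norm without a 1-symmetric basis.) -/

import Mathlib

open Real intervalIntegral

lemma int_cos_sq_sin (a b : ℝ) :
    ∫ t in a..b, Real.cos t ^ 2 * Real.sin t = (Real.cos a ^ 3 - Real.cos b ^ 3) / 3 := by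
  have h : ∀ t : ℝ, HasDerivAt (fun x => -(Real.cos x ^ 3) / 3)
      (Real.cos t ^ 2 * Real.sin t) t := by
    intro t
    have := ((Real.hasDerivAt_cos t).pow 3).neg.div_const 3
    exact this.congr_deriv (by push_cast; ring)
  rw [intervalIntegral.integral_eq_sub_of_hasDerivAt (fun t _ => h t)
    (((Real.continuous_cos.pow 2).mul Real.continuous_sin).intervalIntegrable a b)]
  ring

lemma abs_sin_eqOn_first : Set.EqOn (fun t => |Real.sin t|) Real.sin (Set.uIcc 0 π) := by
  intro t ht
  rw [Set.uIcc_of_le Real.pi_pos.le] at ht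
  exact abs_of_nonneg (Real.sin_nonneg_of_nonneg_of_le_pi ht.1 ht.2)

lemma abs_sin_eqOn_second : Set.EqOn (fun t => |Real.sin t|) (fun t => -Real.sin t)
    (Set.uIcc π (2 * π)) := by
  intro t ht
  rw [Set.uIcc_of_le (by linarith [Real.pi_pos])] at ht
  have h1 : 0 ≤ Real.sin (t - π) :=
    Real.sin_nonneg_of_nonneg_of_le_pi (by linarith [ht.1]) (by linarith [ht.2])
  rw [Real.sin_sub_pi] at h1
  exact abs_of_nonpos (by linarith)

lemma int_cos_sq_abs_sin :
    ∫ t in (0:ℝ)..(2 * π), Real.cos t ^ 2 * |Real.sin t| = 4 / 3 := by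
  have i1 : IntervalIntegrable (fun t => Real.cos t ^ 2 * |Real.sin t|) MeasureTheory.volume 0 π :=
    ((Real.continuous_cos.pow 2).mul Real.continuous_sin.abs).intervalIntegrable _ _
  have i2 : IntervalIntegrable (fun t => Real.cos t ^ 2 * |Real.sin t|) MeasureTheory.volume π (2 * π) :=
    ((Real.continuous_cos.pow 2).mul Real.continuous_sin.abs).intervalIntegrable _ _
  rw [← intervalIntegral.integral_add_adjacent_intervals i1 i2]
  have e1 : ∫ t in (0:ℝ)..π, Real.cos t ^ 2 * |Real.sin t|
      = ∫ t in (0:ℝ)..π, Real.cos t ^ 2 * Real.sin t := by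
    apply intervalIntegral.integral_congr
    intro t ht
    simp [abs_sin_eqOn_first ht]
  have e2 : ∫ t in π..(2 * π), Real.cos t ^ 2 * |Real.sin t|
      = ∫ t in π..(2 * π), -(Real.cos t ^ 2 * Real.sin t) := by
    apply intervalIntegral.integral_congr
    intro t ht
    have := abs_sin_eqOn_second ht
    simp only at this
    show Real.cos t ^ 2 * |Real.sin t| = -(Real.cos t ^ 2 * Real.sin t)
    rw [this]; ring
  rw [e1, e2, intervalIntegral.integral_neg, int_cos_sq_sin, int_cos_sq_sin,
    Real.cos_zero, Real.cos_pi, Real.cos_two_pi]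
  norm_num

lemma int_abs_sin :
    ∫ t in (0:ℝ)..(2 * π), |Real.sin t| = 4 := by
  have i1 : IntervalIntegrable (fun t => |Real.sin t|) MeasureTheory.volume 0 π :=
    Real.continuous_sin.abs.intervalIntegrable _ _
  have i2 : IntervalIntegrable (fun t => |Real.sin t|) MeasureTheory.volume π (2 * π) :=
    Real.continuous_sin.abs.intervalIntegrable _ _
  rw [← intervalIntegral.integral_add_adjacent_intervals i1 i2]
  have e1 : ∫ t in (0:ℝ)..π, |Real.sin t| = ∫ t in (0:ℝ)..π, Real.sin t :=
    intervalIntegral.integral_congr abs_sin_eqOn_first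
  have e2 : ∫ t in π..(2 * π), |Real.sin t| = ∫ t in π..(2 * π), -Real.sin t :=
    intervalIntegral.integral_congr abs_sin_eqOn_second
  rw [e1, e2, intervalIntegral.integral_neg, integral_sin, integral_sin,
    Real.cos_zero, Real.cos_pi, Real.cos_two_pi]
  norm_num

theorem exists_ellipse_average_ne_half :
    ∃ b : ℝ, 0 < b ∧ b < 1 ∧
      (∫ t in (0 : ℝ)..(2 * π),
          Real.cos t ^ 2 * Real.sqrt (Real.sin t ^ 2 + b ^ 2 * Real.cos t ^ 2)) ≠
        (1 / 2) * ∫ t in (0 : ℝ)..(2 * π),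
          Real.sqrt (Real.sin t ^ 2 + b ^ 2 * Real.cos t ^ 2) := by
  obtain ⟨b, hb⟩ : ∃ b : ℝ, b = 1/5 := ⟨_, rfl⟩
  refine ⟨b, by rw [hb]; norm_num, by rw [hb]; norm_num, ?_⟩
  have hb0 : (0:ℝ) < b := by rw [hb]; norm_num
  have hcf : Continuous (fun t => Real.sqrt (Real.sin t ^ 2 + b ^ 2 * Real.cos t ^ 2)) :=
    Real.continuous_sqrt.comp (by continuity)
  have h2pi : (0:ℝ) ≤ 2 * π := by linarith [Real.pi_pos]
  -- pointwise bounds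
  have hub : ∀ t : ℝ, Real.sqrt (Real.sin t ^ 2 + b ^ 2 * Real.cos t ^ 2) ≤ |Real.sin t| + b := by
    intro t
    have h1 : Real.sin t ^ 2 + b ^ 2 * Real.cos t ^ 2 ≤ (|Real.sin t| + b) ^ 2 := by
      have hcos : Real.cos t ^ 2 ≤ 1 := Real.cos_sq_le_one t
      have habs : (0:ℝ) ≤ |Real.sin t| := abs_nonneg _
      have hsq : |Real.sin t| ^ 2 = Real.sin t ^ 2 := sq_abs _
      nlinarith
    calc Real.sqrt (Real.sin t ^ 2 + b ^ 2 * Real.cos t ^ 2)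
        ≤ Real.sqrt ((|Real.sin t| + b) ^ 2) := Real.sqrt_le_sqrt h1
      _ = |Real.sin t| + b := Real.sqrt_sq (by have := abs_nonneg (Real.sin t); linarith)
  have hlb : ∀ t : ℝ, |Real.sin t| ≤ Real.sqrt (Real.sin t ^ 2 + b ^ 2 * Real.cos t ^ 2) := by
    intro t
    rw [← Real.sqrt_sq_eq_abs]
    exact Real.sqrt_le_sqrt (by nlinarith [mul_nonneg (sq_nonneg b) (sq_nonneg (Real.cos t))])
  -- upper bound on LHS
  have hL : (∫ t in (0:ℝ)..(2 * π),
      Real.cos t ^ 2 * Real.sqrt (Real.sin t ^ 2 + b ^ 2 * Real.cos t ^ 2))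
      ≤ 4 / 3 + b * π := by
    have step1 : (∫ t in (0:ℝ)..(2 * π),
        Real.cos t ^ 2 * Real.sqrt (Real.sin t ^ 2 + b ^ 2 * Real.cos t ^ 2))
        ≤ ∫ t in (0:ℝ)..(2 * π), (Real.cos t ^ 2 * |Real.sin t| + b * Real.cos t ^ 2) := by
      apply intervalIntegral.integral_mono_on h2pi
        (((Real.continuous_cos.pow 2).mul hcf).intervalIntegrable _ _)
        ((((Real.continuous_cos.pow 2).mul Real.continuous_sin.abs).add
          ((continuous_const.mul (Real.continuous_cos.pow 2)))).intervalIntegrable _ _)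
      intro t _
      have := mul_le_mul_of_nonneg_left (hub t) (sq_nonneg (Real.cos t))
      show Real.cos t ^ 2 * Real.sqrt (Real.sin t ^ 2 + b ^ 2 * Real.cos t ^ 2)
        ≤ Real.cos t ^ 2 * |Real.sin t| + b * Real.cos t ^ 2
      nlinarith
    have step2 : (∫ t in (0:ℝ)..(2 * π),
        (Real.cos t ^ 2 * |Real.sin t| + b * Real.cos t ^ 2)) = 4 / 3 + b * π := by
      rw [intervalIntegral.integral_add (f := fun t => Real.cos t ^ 2 * |Real.sin t|)
        (g := fun t => b * Real.cos t ^ 2)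
        (((Real.continuous_cos.pow 2).mul Real.continuous_sin.abs).intervalIntegrable _ _)
        ((continuous_const.mul (Real.continuous_cos.pow 2)).intervalIntegrable _ _),
        intervalIntegral.integral_const_mul, int_cos_sq_abs_sin, integral_cos_sq]
      rw [Real.sin_two_pi, Real.cos_two_pi, Real.sin_zero, Real.cos_zero]
      ring
    linarith
  -- lower bound on RHS integral
  have hR : (4:ℝ) ≤ ∫ t in (0:ℝ)..(2 * π),
      Real.sqrt (Real.sin t ^ 2 + b ^ 2 * Real.cos t ^ 2) := by
    rw [← int_abs_sin]
    apply intervalIntegral.integral_mono_on h2pi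
      (Real.continuous_sin.abs.intervalIntegrable _ _)
      (hcf.intervalIntegrable _ _)
    intro t _
    exact hlb t
  have hpi : π < 3.15 := by
    have := Real.pi_lt_d6
    linarith
  apply ne_of_lt
  calc (∫ t in (0:ℝ)..(2 * π),
      Real.cos t ^ 2 * Real.sqrt (Real.sin t ^ 2 + b ^ 2 * Real.cos t ^ 2))
      ≤ 4 / 3 + b * π := hL
    _ < 2 := by rw [hb]; linarith
    _ ≤ (1 / 2) * ∫ t in (0:ℝ)..(2 * π),
        Real.sqrt (Real.sin t ^ 2 + b ^ 2 * Real.cos t ^ 2) := by linarith
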